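/- Let (G,m,w,B) be a connected weighted finite graph with boundary. If ν_i = μ_i for some i ∈ {2, 3, …, |Ω|}, then there exists a nonzero function u ∈ ℝ^V with u|_B = 0 and ∂u/∂n = 0 on B such that −Δu = μ_i u on V and −Δ^N(u|_Ω) = ν_i (u|_Ω); that is, u is simultaneously a Laplacian eigenfunction and (its restriction to Ω) a Neumann Laplacian eigenfunction for the common eigenvalue ν_i = μ_i. -/
import Mathlib


open Finset

noncomputable section

/-- The weighted graph Laplacian `Δ`. -/
def glap {V : Type*} [Fintype V] (m : V → ℝ) (w : V → V → ℝ) (u : V → ℝ) (x : V) : ℝ :=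
  (1 / m x) * ∑ y, (u y - u x) * w x y

/-- Extension by zero to the boundary. -/
def E0 {V : Type*} [DecidableEq V] (B : Finset V) (u : {x : V // x ∉ B} → ℝ) (x : V) : ℝ :=
  if h : x ∈ B then 0 else u ⟨x, h⟩

/-- The normal extension. -/
def N0 {V : Type*} [Fintype V] [DecidableEq V] (w : V → V → ℝ) (B : Finset V)
    (u : {x : V // x ∉ B} → ℝ) (x : V) : ℝ :=
  if h : x ∈ B then
    (∑ y : {x : V // x ∉ B}, u y * w x y.1) / (∑ y : {x : V // x ∉ B}, w x y.1)
  else u ⟨x, h⟩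

/-- The Dirichlet Laplacian `Δ^D`. -/
def dlap {V : Type*} [Fintype V] [DecidableEq V] (m : V → ℝ) (w : V → V → ℝ) (B : Finset V)
    (u : {x : V // x ∉ B} → ℝ) (x : {x : V // x ∉ B}) : ℝ :=
  glap m w (E0 B u) x.1

/-- The Neumann Laplacian `Δ^N`. -/
def nlap {V : Type*} [Fintype V] [DecidableEq V] (m : V → ℝ) (w : V → V → ℝ) (B : Finset V)
    (u : {x : V // x ∉ B} → ℝ) (x : {x : V // x ∉ B}) : ℝ :=
  glap m w (N0 w B u) x.1

/-- The Laplacian `Δ_Ω` of the induced interior subgraph. -/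
def olap {V : Type*} [Fintype V] [DecidableEq V] (m : V → ℝ) (w : V → V → ℝ) (B : Finset V)
    (u : {x : V // x ∉ B} → ℝ) (x : {x : V // x ∉ B}) : ℝ :=
  (1 / m x.1) * ∑ y : {x : V // x ∉ B}, (u y - u x) * w x.1 y.1

/-- The weighted boundary vertex degree `Deg_b`. -/
def degb {V : Type*} [DecidableEq V] (m : V → ℝ) (w : V → V → ℝ) (B : Finset V) (x : V) : ℝ :=
  (1 / m x) * ∑ y ∈ B, w x y

/-- The operator `T = A_B ∘ Deg⁻¹ ∘ A_Ω`. -/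
def bop {V : Type*} [Fintype V] [DecidableEq V] (m : V → ℝ) (w : V → V → ℝ) (B : Finset V)
    (u : {x : V // x ∉ B} → ℝ) (z : {x : V // x ∉ B}) : ℝ :=
  (1 / m z.1) * ∑ x ∈ B, w x z.1 *
    ((∑ y : {x : V // x ∉ B}, u y * w x y.1) / (∑ y : {x : V // x ∉ B}, w x y.1))

/-- The Bakry–Émery `Γ` operator of a Laplacian-type operator `L`. -/
def gam {W : Type*} (L : (W → ℝ) → (W → ℝ)) (f g : W → ℝ) (x : W) : ℝ :=
  (L (fun y => f y * g y) x - f x * L g x - g x * L f x) / 2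

/-- The Bakry–Émery `Γ₂` operator of a Laplacian-type operator `L`. -/
def gam2 {W : Type*} (L : (W → ℝ) → (W → ℝ)) (f : W → ℝ) (x : W) : ℝ :=
  L (gam L f f) x / 2 - gam L f (L f) x

/-- `e` is a complete list of the eigenvalues of `L` : there is a corresponding eigenbasis
which is orthonormal with respect to the inner product weighted by `m`. -/
def IsEigenBasis {n : ℕ} {W : Type*} [Fintype W] (m : W → ℝ)
    (L : (W → ℝ) → (W → ℝ)) (e : Fin n → ℝ) : Prop :=
  ∃ φ : Fin n → W → ℝ,
    (∀ i j, (∑ x, φ i x * φ j x * m x) = if i = j then 1 else 0) ∧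
    ∀ i, L (φ i) = fun x => e i * φ i x

/- helper lemmas -/

lemma glap_linc {V : Type*} [Fintype V] (m : V → ℝ) (w : V → V → ℝ) {ι : Type*} [Fintype ι]
    (c : ι → ℝ) (g : ι → V → ℝ) (x : V) :
    glap m w (fun y => ∑ t, c t * g t y) x = ∑ t, c t * glap m w (g t) x := by
  simp only [glap, Finset.mul_sum]
  rw [Finset.sum_comm]
  congr 1; ext y
  rw [← Finset.sum_sub_distrib, Finset.sum_mul, Finset.mul_sum]
  congr 1; ext t; ring

lemma neg_glap {V : Type*} [Fintype V] (m : V → ℝ) (w : V → V → ℝ) (u : V → ℝ) (x : V) :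
    -(glap m w u x) = (1 / m x) * ∑ y, (u x - u y) * w x y := by
  simp only [glap]
  rw [neg_mul_eq_mul_neg, ← Finset.sum_neg_distrib]
  exact congrArg _ (Finset.sum_congr rfl fun y _ => by ring)

lemma glap_quad {V : Type*} [Fintype V] (m : V → ℝ) (hm : ∀ x, 0 < m x)
    (w : V → V → ℝ) (hwsymm : ∀ x y, w x y = w y x) (u : V → ℝ) :
    ∑ x, (-(glap m w u x)) * u x * m x = (1/2) * ∑ x, ∑ y, (u x - u y)^2 * w x y := by
  have step1 : ∀ x : V, (-(glap m w u x)) * u x * m x = ∑ y, (u x - u y) * w x y * u x := by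
    intro x
    rw [neg_glap, mul_assoc, mul_comm (u x), mul_mul_mul_comm,
      one_div_mul_cancel (hm x).ne', one_mul, Finset.sum_mul]
  rw [Finset.sum_congr rfl (fun x _ => step1 x)]
  have hS2 : (∑ x : V, ∑ y : V, (u x - u y) * w x y * u y)
      = -(∑ x : V, ∑ y : V, (u x - u y) * w x y * u x) := by
    rw [Finset.sum_comm, ← Finset.sum_neg_distrib]
    refine Finset.sum_congr rfl fun y _ => ?_
    rw [← Finset.sum_neg_distrib]
    refine Finset.sum_congr rfl fun x _ => ?_
    rw [hwsymm y x]; ring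
  have hdiff : (∑ x : V, ∑ y : V, (u x - u y)^2 * w x y)
      = (∑ x : V, ∑ y : V, (u x - u y) * w x y * u x)
        - ∑ x : V, ∑ y : V, (u x - u y) * w x y * u y := by
    rw [← Finset.sum_sub_distrib]
    refine Finset.sum_congr rfl fun x _ => ?_
    rw [← Finset.sum_sub_distrib]
    exact Finset.sum_congr rfl fun y _ => by ring
  linarith [hdiff, hS2]

lemma walk_const {V : Type*} (G : SimpleGraph V) (u : V → ℝ)
    (h : ∀ x y, G.Adj x y → u x = u y) {x y : V} (hr : G.Reachable x y) : u x = u y := by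
  obtain ⟨p⟩ := hr
  induction p with
  | nil => rfl
  | cons hadj _ ih => exact (h _ _ hadj).trans ih

lemma onb_complete {V : Type*} [Fintype V] [DecidableEq V] (m : V → ℝ)
    (f : Fin (Fintype.card V) → V → ℝ)
    (horth : ∀ i j, (∑ x, f i x * f j x * m x) = if i = j then 1 else 0) :
    ∀ x y : V, (∑ j, f j x * f j y * m y) = if x = y then 1 else 0 := by
  classical
  let e : V ≃ Fin (Fintype.card V) := Fintype.equivFin V
  set X : Matrix (Fin (Fintype.card V)) (Fin (Fintype.card V)) ℝ :=
    fun j s => f j (e.symm s) * m (e.symm s) with hX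
  set Y : Matrix (Fin (Fintype.card V)) (Fin (Fintype.card V)) ℝ :=
    fun s j => f j (e.symm s) with hY
  have hXY : X * Y = 1 := by
    ext j j'
    rw [Matrix.mul_apply, Matrix.one_apply]
    have := horth j j'
    rw [← Equiv.sum_comp e.symm (fun x => f j x * f j' x * m x)] at this
    rw [← this]
    exact Finset.sum_congr rfl fun s _ => by simp [hX, hY]; ring
  have hYX : Y * X = 1 := mul_eq_one_comm.mp hXY
  intro x y
  have := congrFun (congrFun hYX (e x)) (e y)
  rw [Matrix.mul_apply, Matrix.one_apply] at this
  simp only [hX, hY, Equiv.symm_apply_apply] at this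
  rw [show ((if x = y then (1:ℝ) else 0)) = (if e x = e y then 1 else 0) by
    simp [EmbeddingLike.apply_eq_iff_eq]]
  rw [← this]
  exact Finset.sum_congr rfl fun j _ => by ring

lemma N0_linc {V : Type*} [Fintype V] [DecidableEq V] (w : V → V → ℝ) (B : Finset V)
    {ι : Type*} [Fintype ι] (c : ι → ℝ) (g : ι → {x : V // x ∉ B} → ℝ) (x : V) :
    N0 w B (fun y => ∑ t, c t * g t y) x = ∑ t, c t * N0 w B (g t) x := by
  simp only [N0]
  by_cases h : x ∈ B
  · simp only [dif_pos h, ← mul_div_assoc]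
    rw [← Finset.sum_div]
    congr 1
    rw [show (∑ y : {x : V // x ∉ B}, (∑ t, c t * g t y) * w x y.1)
        = ∑ y : {x : V // x ∉ B}, ∑ t, c t * g t y * w x y.1 from
      Finset.sum_congr rfl fun y _ => by rw [Finset.sum_mul]]
    rw [Finset.sum_comm]
    refine Finset.sum_congr rfl fun t _ => ?_
    rw [Finset.mul_sum]
    exact Finset.sum_congr rfl fun y _ => by ring
  · simp only [dif_neg h]

lemma sum_split {V : Type*} [Fintype V] [DecidableEq V] (B : Finset V) (F : V → ℝ) :
    ∑ x : V, F x = (∑ x ∈ B, F x) + ∑ x : {x : V // x ∉ B}, F x.1 := by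
  rw [← Finset.sum_subtype Bᶜ (by simp) F]
  rw [← Finset.sum_add_sum_compl B F]

lemma glap_N0_boundary {V : Type*} [Fintype V] [DecidableEq V] (m : V → ℝ)
    (w : V → V → ℝ) (B : Finset V)
    (hwB : ∀ x ∈ B, ∀ y ∈ B, w x y = 0)
    (hD : ∀ x ∈ B, (∑ y : {x : V // x ∉ B}, w x y.1) ≠ 0)
    (v : {x : V // x ∉ B} → ℝ) {x : V} (hx : x ∈ B) :
    glap m w (N0 w B v) x = 0 := by
  rw [glap]
  have : ∑ y : V, (N0 w B v y - N0 w B v x) * w x y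
      = ∑ y : {x : V // x ∉ B}, (v y - N0 w B v x) * w x y.1 := by
    rw [sum_split B (fun y => (N0 w B v y - N0 w B v x) * w x y)]
    rw [Finset.sum_eq_zero (fun y hy => by rw [hwB x hx y hy, mul_zero]), zero_add]
    exact Finset.sum_congr rfl fun y _ => by rw [N0, dif_neg y.2]
  rw [this]
  have hN0x : N0 w B v x = (∑ y : {x : V // x ∉ B}, v y * w x y.1)
      / (∑ y : {x : V // x ∉ B}, w x y.1) := by rw [N0, dif_pos hx]
  rw [Finset.sum_congr rfl (fun y _ => sub_mul (v y) (N0 w B v x) (w x y.1)),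
    Finset.sum_sub_distrib, ← Finset.mul_sum, hN0x, div_mul_cancel₀ _ (hD x hx),
    sub_self, mul_zero]

theorem stmt_1 {V : Type*} [Fintype V] [DecidableEq V]
    (G : SimpleGraph V) (hconn : G.Connected)
    (m : V → ℝ) (hm : ∀ x, 0 < m x)
    (w : V → V → ℝ) (hwsymm : ∀ x y, w x y = w y x)
    (hwpos : ∀ x y, G.Adj x y → 0 < w x y)
    (hw0 : ∀ x y, ¬ G.Adj x y → w x y = 0)
    (B : Finset V) (hB : B.Nonempty)
    (hBB : ∀ x ∈ B, ∀ y ∈ B, ¬ G.Adj x y)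
    (hBint : ∀ x ∈ B, ∃ y, y ∉ B ∧ G.Adj x y)
    (μ : Fin (Fintype.card V) → ℝ) (hμmono : Monotone μ)
    (hμ : IsEigenBasis m (glap m w) (fun i => -(μ i)))
    (ν : Fin (Fintype.card {x : V // x ∉ B}) → ℝ) (hνmono : Monotone ν)
    (hν : IsEigenBasis (fun x : {x : V // x ∉ B} => m x.1) (nlap m w B) (fun i => -(ν i)))
    (i : Fin (Fintype.card {x : V // x ∉ B})) (hi : 1 ≤ i.1)
    (heq : ν i = μ ⟨i.1, lt_of_lt_of_le i.2 (Fintype.card_subtype_le _)⟩)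
    :
    ∃ u : V → ℝ, u ≠ 0 ∧ (∀ x ∈ B, u x = 0) ∧ (∀ x ∈ B, glap m w u x = 0) ∧
      (∀ x, glap m w u x = -(μ ⟨i.1, lt_of_lt_of_le i.2 (Fintype.card_subtype_le _)⟩) * u x) ∧
      (∀ x : {x : V // x ∉ B}, nlap m w B (fun y => u y.1) x = -(ν i) * u x.1) := by
  classical
  obtain ⟨f, hf1, hf2⟩ := hμ
  obtain ⟨ψ, hp1, hp2⟩ := hν
  set lam : ℝ := ν i with hlamdef
  -- basic facts
  have hwnn : ∀ x y, 0 ≤ w x y := fun x y => by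
    by_cases h : G.Adj x y
    · exact (hwpos x y h).le
    · rw [hw0 x y h]
  have hwB : ∀ x ∈ B, ∀ y ∈ B, w x y = 0 := fun x hx y hy => hw0 x y (hBB x hx y hy)
  have hD : ∀ x ∈ B, (0:ℝ) < ∑ y : {x : V // x ∉ B}, w x y.1 := by
    intro x hx
    obtain ⟨y, hyB, hyadj⟩ := hBint x hx
    exact Finset.sum_pos' (fun z _ => hwnn x z.1)
      ⟨⟨y, hyB⟩, Finset.mem_univ _, hwpos x y hyadj⟩
  have hDne : ∀ x ∈ B, (∑ y : {x : V // x ∉ B}, w x y.1) ≠ 0 := fun x hx => (hD x hx).ne'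
  -- μ j as quadratic form of f j
  have hA : ∀ j, ∑ x, (-(glap m w (f j) x)) * f j x * m x = μ j := by
    intro j
    have h1 : ∀ x, (-(glap m w (f j) x)) * f j x * m x = μ j * (f j x * f j x * m x) := by
      intro x
      rw [show glap m w (f j) x = -(μ j) * f j x from congrFun (hf2 j) x]
      ring
    rw [Finset.sum_congr rfl fun x _ => h1 x, ← Finset.mul_sum, hf1 j j, if_pos rfl, mul_one]
  have hmu_nn : ∀ j, 0 ≤ μ j := by
    intro j
    rw [← hA j, glap_quad m hm w hwsymm]
    have : (0:ℝ) ≤ ∑ x, ∑ y, (f j x - f j y)^2 * w x y :=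
      Finset.sum_nonneg fun x _ => Finset.sum_nonneg fun y _ =>
        mul_nonneg (sq_nonneg _) (hwnn x y)
    linarith
  -- positivity of lam
  have hcardV : 1 < Fintype.card V := by
    have h1 : i.1 < Fintype.card V := lt_of_lt_of_le i.2 (Fintype.card_subtype_le _)
    omega
  have hlampos : 0 < lam := by
    by_contra hneg
    push_neg at hneg
    set j0 : Fin (Fintype.card V) := ⟨0, by omega⟩ with hj0
    set j1 : Fin (Fintype.card V) := ⟨1, by omega⟩ with hj1
    have hle0 : μ j0 ≤ lam := by
      rw [heq]
      exact hμmono (by simp [Fin.le_def, hj0])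
    have hle1 : μ j1 ≤ lam := by
      rw [heq]
      exact hμmono (by simp [Fin.le_def, hj1]; omega)
    have hμ0 : μ j0 = 0 := le_antisymm (le_trans hle0 hneg) (hmu_nn j0)
    have hμ1 : μ j1 = 0 := le_antisymm (le_trans hle1 hneg) (hmu_nn j1)
    have hconst : ∀ j, μ j = 0 → ∀ x y : V, f j x = f j y := by
      intro j hj x y
      have hq := glap_quad m hm w hwsymm (f j)
      rw [hA j, hj] at hq
      have hzero : ∑ x, ∑ y, (f j x - f j y)^2 * w x y = 0 := by linarith
      have hterm : ∀ a ∈ (univ : Finset V), ∀ b ∈ (univ : Finset V),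
          (f j a - f j b)^2 * w a b = 0 := by
        intro a _ b hb
        have h1 := (Finset.sum_eq_zero_iff_of_nonneg (fun a _ =>
          Finset.sum_nonneg fun b _ => mul_nonneg (sq_nonneg _) (hwnn a b))).mp
          hzero.symm.symm a (mem_univ a)
        exact (Finset.sum_eq_zero_iff_of_nonneg (fun b _ =>
          mul_nonneg (sq_nonneg _) (hwnn a b))).mp h1 b hb
      have hedge : ∀ a b, G.Adj a b → f j a = f j b := by
        intro a b hab
        have := hterm a (mem_univ a) b (mem_univ b)
        rcases mul_eq_zero.mp this with h | h
        · exact sub_eq_zero.mp ((pow_eq_zero_iff two_ne_zero).mp h)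
        · exact absurd h (hwpos a b hab).ne'
      exact walk_const G (f j) hedge (hconn.preconnected x y)
    obtain ⟨x0, hx0⟩ := hB
    have hc0 := hconst j0 hμ0
    have hc1 := hconst j1 hμ1
    have e00 : f j0 x0 * f j0 x0 * (∑ x, m x) = 1 := by
      have h := hf1 j0 j0
      rw [if_pos rfl] at h
      rw [← h, Finset.mul_sum]
      exact Finset.sum_congr rfl fun x _ => by rw [hc0 x0 x]
    have e11 : f j1 x0 * f j1 x0 * (∑ x, m x) = 1 := by
      have h := hf1 j1 j1
      rw [if_pos rfl] at h
      rw [← h, Finset.mul_sum]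
      exact Finset.sum_congr rfl fun x _ => by rw [hc1 x0 x]
    have e01 : f j0 x0 * f j1 x0 * (∑ x, m x) = 0 := by
      have hne : j0 ≠ j1 := by simp [hj0, hj1, Fin.ext_iff]
      have h := hf1 j0 j1
      rw [if_neg hne] at h
      rw [← h, Finset.mul_sum]
      exact Finset.sum_congr rfl fun x _ => by rw [hc0 x0 x, hc1 x0 x]
    nlinarith [e00, e11, e01]
  -- index embeddings
  have hkn : i.1 + 1 ≤ Fintype.card {x : V // x ∉ B} := i.2
  set emb : Fin (i.1+1) → Fin (Fintype.card {x : V // x ∉ B}) :=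
    fun t => ⟨t.1, lt_of_lt_of_le t.2 hkn⟩ with hemb
  set embk : Fin i.1 → Fin (Fintype.card V) :=
    fun j => ⟨j.1, lt_of_lt_of_le (lt_trans j.2 i.2) (Fintype.card_subtype_le _)⟩ with hembk
  -- the constraint matrix and a nonzero kernel vector
  set M : Matrix (Fin i.1) (Fin (i.1+1)) ℝ :=
    fun j t => ∑ x : V, N0 w B (ψ (emb t)) x * f (embk j) x * m x with hMdef
  have hnotinj : ¬ Function.Injective M.mulVecLin := by
    intro hinj
    have hle := LinearMap.finrank_le_finrank_of_injective hinj
    rw [Module.finrank_fintype_fun_eq_card, Module.finrank_fintype_fun_eq_card] at hle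
    simp at hle
  obtain ⟨c1, c2, hc12, hne12⟩ := Function.not_injective_iff.mp hnotinj
  set c : Fin (i.1+1) → ℝ := c1 - c2 with hcdef
  have hcne : c ≠ 0 := sub_ne_zero.mpr hne12
  have hMc : M.mulVec c = 0 := by
    have h1 : M.mulVecLin c = 0 := by
      rw [hcdef, map_sub, hc12, sub_self]
    rw [← Matrix.mulVecLin_apply, h1]
  -- the candidate functions
  set v : {x : V // x ∉ B} → ℝ := fun x => ∑ t, c t * ψ (emb t) x with hv
  set u : V → ℝ := N0 w B v with hu
  have huv : ∀ x : {x : V // x ∉ B}, u x.1 = v x := by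
    intro x
    rw [hu, N0, dif_neg x.2]
  have hulin : ∀ x : V, u x = ∑ t, c t * N0 w B (ψ (emb t)) x := by
    intro x
    rw [hu, hv]
    exact N0_linc w B c (fun t => ψ (emb t)) x
  -- orthogonality constraints
  have hconstraint : ∀ j : Fin i.1, ∑ x : V, u x * f (embk j) x * m x = 0 := by
    intro j
    have h0 : M.mulVec c j = 0 := congrFun hMc j
    rw [Matrix.mulVec, dotProduct] at h0
    rw [← h0]
    rw [Finset.sum_congr rfl fun x (_ : x ∈ univ) => by
      rw [hulin x, Finset.sum_mul, Finset.sum_mul]]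
    rw [Finset.sum_comm]
    refine Finset.sum_congr rfl fun t _ => ?_
    rw [mul_comm (M j t) (c t),
      show M j t = ∑ x : V, N0 w B (ψ (emb t)) x * f (embk j) x * m x from rfl,
      Finset.mul_sum]
    exact Finset.sum_congr rfl fun x _ => by ring
  -- coefficients of v against the Neumann eigenbasis
  have hco : ∀ s : Fin (i.1+1),
      ∑ x : {x : V // x ∉ B}, v x * ψ (emb s) x * m x.1 = c s := by
    intro s
    have e1 : ∑ x : {x : V // x ∉ B}, v x * ψ (emb s) x * m x.1
        = ∑ t, ∑ x : {x : V // x ∉ B}, c t * ψ (emb t) x * ψ (emb s) x * m x.1 := by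
      rw [Finset.sum_comm]
      refine Finset.sum_congr rfl fun x _ => ?_
      rw [show v x = ∑ t, c t * ψ (emb t) x from rfl, Finset.sum_mul, Finset.sum_mul]
    rw [e1]
    have hstep : ∀ t, (∑ x : {x : V // x ∉ B}, c t * ψ (emb t) x * ψ (emb s) x * m x.1)
        = c t * (if emb t = emb s then 1 else 0) := by
      intro t
      rw [← hp1 (emb t) (emb s), Finset.mul_sum]
      exact Finset.sum_congr rfl fun x _ => by ring
    rw [Finset.sum_congr rfl fun t _ => hstep t]
    have hiff : ∀ t : Fin (i.1+1), (emb t = emb s) ↔ (t = s) := by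
      intro t
      simp [hemb, Fin.ext_iff]
    rw [Finset.sum_congr rfl fun t _ => by rw [if_congr (hiff t) rfl rfl]]
    simp
  have hvne : v ≠ 0 := by
    intro h0
    apply hcne
    funext s
    have := hco s
    rw [h0] at this
    simpa using this.symm
  have hune : u ≠ 0 := by
    intro h0
    apply hvne
    funext x
    rw [← huv x, h0]
    rfl
  -- expansion of u in the eigenbasis f
  have hcompl := onb_complete m f hf1
  set a : Fin (Fintype.card V) → ℝ := fun j => ∑ x, u x * f j x * m x with haa
  have hexp : ∀ x, u x = ∑ j, a j * f j x := by
    intro x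
    have e1 : ∑ j, a j * f j x = ∑ j, ∑ y : V, u y * f j y * m y * f j x := by
      refine Finset.sum_congr rfl fun j _ => ?_
      rw [show a j = ∑ y, u y * f j y * m y from rfl, Finset.sum_mul]
    have e2 : ∑ j, ∑ y : V, u y * f j y * m y * f j x
        = ∑ y : V, u y * (∑ j, f j x * f j y * m y) := by
      rw [Finset.sum_comm]
      refine Finset.sum_congr rfl fun y _ => ?_
      rw [Finset.mul_sum]
      exact Finset.sum_congr rfl fun j _ => by ring
    have e3 : ∑ y : V, u y * (∑ j, f j x * f j y * m y)
        = ∑ y : V, u y * (if x = y then 1 else 0) :=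
      Finset.sum_congr rfl fun y _ => by rw [hcompl x y]
    rw [e1, e2, e3]
    simp
  -- vanishing coefficients below level i
  have ha0 : ∀ j : Fin (Fintype.card V), j.1 < i.1 → a j = 0 := by
    intro j hj
    have h := hconstraint ⟨j.1, hj⟩
    have hjj : embk ⟨j.1, hj⟩ = j := by
      rw [hembk]
    rw [hjj] at h
    exact h
  -- glap of u
  have hglapu : ∀ x, glap m w u x = ∑ j, a j * (-(μ j) * f j x) := by
    intro x
    rw [show u = fun y => ∑ j, a j * f j y from funext hexp, glap_linc]
    refine Finset.sum_congr rfl fun j _ => ?_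
    rw [show glap m w (f j) x = -(μ j) * f j x from congrFun (hf2 j) x]
  -- quadratic forms on the whole graph
  have hAuu : ∑ x, (-(glap m w u x)) * u x * m x = ∑ j, μ j * (a j)^2 := by
    have e1 : ∀ x, (-(glap m w u x)) * u x * m x
        = ∑ j, μ j * a j * (f j x * u x * m x) := by
      intro x
      rw [hglapu x, ← Finset.sum_neg_distrib, Finset.sum_mul, Finset.sum_mul]
      exact Finset.sum_congr rfl fun j _ => by ring
    rw [Finset.sum_congr rfl fun x _ => e1 x, Finset.sum_comm]
    refine Finset.sum_congr rfl fun j _ => ?_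
    rw [← Finset.mul_sum,
      show (∑ x, f j x * u x * m x) = a j from
        (Finset.sum_congr rfl fun x _ => by ring).trans
          (show (∑ x, u x * f j x * m x) = a j from rfl)]
    ring
  have hNu : ∑ x, u x * u x * m x = ∑ j, (a j)^2 := by
    have e1 : ∀ x, u x * u x * m x = ∑ j, a j * (f j x * u x * m x) := by
      intro x
      nth_rewrite 1 [hexp x]
      rw [Finset.sum_mul, Finset.sum_mul]
      exact Finset.sum_congr rfl fun j _ => by ring
    rw [Finset.sum_congr rfl fun x _ => e1 x, Finset.sum_comm]
    refine Finset.sum_congr rfl fun j _ => ?_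
    rw [← Finset.mul_sum,
      show (∑ x, f j x * u x * m x) = a j from
        (Finset.sum_congr rfl fun x _ => by ring).trans
          (show (∑ x, u x * f j x * m x) = a j from rfl)]
    ring
  -- nlap of v
  have hnlapv : ∀ x : {x : V // x ∉ B},
      nlap m w B v x = ∑ t, c t * (-(ν (emb t)) * ψ (emb t) x) := by
    intro x
    rw [show nlap m w B v x = glap m w (N0 w B v) x.1 from rfl]
    rw [show N0 w B v = fun y => ∑ t, c t * N0 w B (ψ (emb t)) y from
      funext fun y => by rw [← hu]; exact hulin y]
    rw [glap_linc]
    refine Finset.sum_congr rfl fun t _ => ?_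
    congr 1
    exact congrFun (hp2 (emb t)) x
  have hANvv : ∑ x : {x : V // x ∉ B}, (-(nlap m w B v x)) * v x * m x.1
      = ∑ t, ν (emb t) * (c t)^2 := by
    have e1 : ∀ x : {x : V // x ∉ B}, (-(nlap m w B v x)) * v x * m x.1
        = ∑ t, ν (emb t) * c t * (v x * ψ (emb t) x * m x.1) := by
      intro x
      rw [hnlapv x, ← Finset.sum_neg_distrib, Finset.sum_mul, Finset.sum_mul]
      exact Finset.sum_congr rfl fun t _ => by ring
    rw [Finset.sum_congr rfl fun x _ => e1 x, Finset.sum_comm]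
    refine Finset.sum_congr rfl fun t _ => ?_
    rw [← Finset.mul_sum, hco t]
    ring
  have hNv : ∑ x : {x : V // x ∉ B}, v x * v x * m x.1 = ∑ t, (c t)^2 := by
    have e1 : ∀ x : {x : V // x ∉ B}, v x * v x * m x.1
        = ∑ t, c t * (v x * ψ (emb t) x * m x.1) := by
      intro x
      nth_rewrite 1 [show v x = ∑ t, c t * ψ (emb t) x from rfl]
      rw [Finset.sum_mul, Finset.sum_mul]
      exact Finset.sum_congr rfl fun t _ => by ring
    rw [Finset.sum_congr rfl fun x _ => e1 x, Finset.sum_comm]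
    refine Finset.sum_congr rfl fun t _ => ?_
    rw [← Finset.mul_sum, hco t]
    ring
  -- bridge between the two quadratic forms
  have hbridge : ∑ x, (-(glap m w u x)) * u x * m x
      = ∑ x : {x : V // x ∉ B}, (-(nlap m w B v x)) * v x * m x.1 := by
    rw [sum_split B (fun x => (-(glap m w u x)) * u x * m x)]
    rw [Finset.sum_eq_zero (fun x hx => by
      rw [hu, glap_N0_boundary m w B hwB hDne v hx]
      ring), zero_add]
    refine Finset.sum_congr rfl fun x _ => ?_
    rw [huv x, hu]
    rfl
  have hsplitN : ∑ x, u x * u x * m x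
      = (∑ x ∈ B, u x * u x * m x) + ∑ x : {x : V // x ∉ B}, v x * v x * m x.1 := by
    rw [sum_split B (fun x => u x * u x * m x)]
    congr 1
    exact Finset.sum_congr rfl fun x _ => by rw [huv x]
  -- nonnegativity of the three defects
  have hT1 : ∀ j : Fin (Fintype.card V), 0 ≤ (μ j - lam) * (a j)^2 := by
    intro j
    rcases lt_or_ge j.1 i.1 with h | h
    · rw [ha0 j h]
      simp
    · have hle : (⟨i.1, lt_of_lt_of_le i.2 (Fintype.card_subtype_le _)⟩ :
          Fin (Fintype.card V)) ≤ j := h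
      have := hμmono hle
      rw [← heq] at this
      nlinarith [sq_nonneg (a j)]
  have hT2 : ∀ t : Fin (i.1+1), 0 ≤ (lam - ν (emb t)) * (c t)^2 := by
    intro t
    have hle : emb t ≤ i := by
      rw [hemb]
      exact Nat.lt_succ_iff.mp t.2
    have := hνmono hle
    rw [← hlamdef] at this
    nlinarith [sq_nonneg (c t)]
  have hT3 : ∀ x ∈ B, 0 ≤ u x * u x * m x :=
    fun x _ => mul_nonneg (mul_self_nonneg (u x)) (hm x).le
  -- the three defects sum to zero
  have hkey : (∑ j, (μ j - lam) * (a j)^2) + (∑ t, (lam - ν (emb t)) * (c t)^2)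
      + lam * (∑ x ∈ B, u x * u x * m x) = 0 := by
    have hb : ∑ j, μ j * (a j)^2 = ∑ t, ν (emb t) * (c t)^2 := by
      rw [← hAuu, ← hANvv]
      exact hbridge
    have hn2 : (∑ x ∈ B, u x * u x * m x) + ∑ t, (c t)^2 = ∑ j, (a j)^2 := by
      rw [← hNv, ← hsplitN]
      exact hNu
    have hsum1 : ∑ j, (μ j - lam) * (a j)^2
        = (∑ j, μ j * (a j)^2) - lam * ∑ j, (a j)^2 := by
      rw [Finset.mul_sum, ← Finset.sum_sub_distrib]
      exact Finset.sum_congr rfl fun j _ => by ring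
    have hsum2 : ∑ t, (lam - ν (emb t)) * (c t)^2
        = lam * (∑ t, (c t)^2) - ∑ t, ν (emb t) * (c t)^2 := by
      rw [Finset.mul_sum, ← Finset.sum_sub_distrib]
      exact Finset.sum_congr rfl fun t _ => by ring
    rw [hsum1, hsum2]
    linear_combination hb + lam * hn2
  have hge1 : (0:ℝ) ≤ ∑ j, (μ j - lam) * (a j)^2 :=
    Finset.sum_nonneg fun j _ => hT1 j
  have hge2 : (0:ℝ) ≤ ∑ t, (lam - ν (emb t)) * (c t)^2 :=
    Finset.sum_nonneg fun t _ => hT2 t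
  have hge3 : (0:ℝ) ≤ lam * ∑ x ∈ B, u x * u x * m x :=
    mul_nonneg hlampos.le (Finset.sum_nonneg hT3)
  have he1 : ∑ j, (μ j - lam) * (a j)^2 = 0 := by linarith
  have he2 : ∑ t, (lam - ν (emb t)) * (c t)^2 = 0 := by linarith
  have he3 : lam * ∑ x ∈ B, u x * u x * m x = 0 := by linarith
  -- boundary vanishing
  have hub : ∀ x ∈ B, u x = 0 := by
    intro x hx
    have hBq : ∑ x ∈ B, u x * u x * m x = 0 := by
      rcases mul_eq_zero.mp he3 with h | h
      · exact absurd h hlampos.ne'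
      · exact h
    have := (Finset.sum_eq_zero_iff_of_nonneg hT3).mp hBq x hx
    rcases mul_eq_zero.mp this with h | h
    · exact mul_self_eq_zero.mp h
    · exact absurd h (hm x).ne'
  -- eigen-equations
  have haj : ∀ j : Fin (Fintype.card V), μ j * a j = lam * a j := by
    intro j
    have h := (Finset.sum_eq_zero_iff_of_nonneg
      (f := fun j : Fin (Fintype.card V) => (μ j - lam) * (a j)^2) (s := univ)
      (fun j _ => hT1 j)).mp he1 j (mem_univ j)
    rcases mul_eq_zero.mp h with h' | h'
    · rw [sub_eq_zero.mp h']
    · rw [sq_eq_zero_iff.mp h', mul_zero, mul_zero]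
  have hct : ∀ t : Fin (i.1+1), ν (emb t) * c t = lam * c t := by
    intro t
    have h := (Finset.sum_eq_zero_iff_of_nonneg
      (f := fun t : Fin (i.1+1) => (lam - ν (emb t)) * (c t)^2) (s := univ)
      (fun t _ => hT2 t)).mp he2 t (mem_univ t)
    rcases mul_eq_zero.mp h with h' | h'
    · rw [← sub_eq_zero.mp h']
    · rw [sq_eq_zero_iff.mp h', mul_zero, mul_zero]
  have hglap_eig : ∀ x, glap m w u x = -lam * u x := by
    intro x
    rw [hglapu x, hexp x, Finset.mul_sum]
    refine Finset.sum_congr rfl fun j _ => ?_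
    have := haj j
    linear_combination (-(f j x)) * this
  have hnlap_eig : ∀ x : {x : V // x ∉ B}, nlap m w B v x = -lam * v x := by
    intro x
    rw [hnlapv x, show v x = ∑ t, c t * ψ (emb t) x from rfl, Finset.mul_sum]
    refine Finset.sum_congr rfl fun t _ => ?_
    have := hct t
    linear_combination (-(ψ (emb t) x)) * this
  -- conclusion
  refine ⟨u, hune, hub, ?_, ?_, ?_⟩
  · intro x hx
    rw [hu]
    exact glap_N0_boundary m w B hwB hDne v hx
  · intro x
    rw [hglap_eig x, heq]
  · intro x
    have hfv : (fun y : {x : V // x ∉ B} => u y.1) = v := funext fun y => huv y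
    rw [hfv, hnlap_eig x, huv x, hlamdef]
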